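/- Let s₂ and s₄ be the birational maps on (q, p, a₀, a₁, a₂, a₃, a₄) defined by s₂: q ↦ q + a₂/p, (a₀, a₁, a₂, a₃, a₄) ↦ (a₀+a₂, a₁+a₂, −a₂, a₃+a₂, a₄+a₂) (p fixed), and s₄: p ↦ p − a₄/q, (a₂, a₄) ↦ (a₂+a₄, −a₄) (q, a₀, a₁, a₃ fixed). Then s₂∘s₄∘s₂ = s₄∘s₂∘s₄ as birational maps. -/

import Mathlib

/-- The Bäcklund transformation `s₂` of P_VI on `(q, p, a₀, a₁, a₂, a₃, a₄)`:
`q ↦ q + a₂/p`, `(a₀,a₁,a₂,a₃,a₄) ↦ (a₀+a₂, a₁+a₂, −a₂, a₃+a₂, a₄+a₂)`. -/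
noncomputable def PVIs₂ {K : Type*} [Field K] (v : K × K × K × K × K × K × K) :
    K × K × K × K × K × K × K :=
  (v.1 + v.2.2.2.2.1 / v.2.1, v.2.1, v.2.2.1 + v.2.2.2.2.1, v.2.2.2.1 + v.2.2.2.2.1,
    -v.2.2.2.2.1, v.2.2.2.2.2.1 + v.2.2.2.2.1, v.2.2.2.2.2.2 + v.2.2.2.2.1)

/-- The Bäcklund transformation `s₄` of P_VI on `(q, p, a₀, a₁, a₂, a₃, a₄)`:
`p ↦ p − a₄/q`, `(a₂,a₄) ↦ (a₂+a₄, −a₄)`. -/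
noncomputable def PVIs₄ {K : Type*} [Field K] (v : K × K × K × K × K × K × K) :
    K × K × K × K × K × K × K :=
  (v.1, v.2.1 - v.2.2.2.2.2.2 / v.1, v.2.2.1, v.2.2.2.1,
    v.2.2.2.2.1 + v.2.2.2.2.2.2, v.2.2.2.2.2.1, -v.2.2.2.2.2.2)

/-- The braid relation `s₂∘s₄∘s₂ = s₄∘s₂∘s₄` for the Bäcklund transformations of P_VI
(nodes 2 and 4 are adjacent in the `D₄⁽¹⁾` Dynkin diagram), wherever both compositions are
defined (no denominator along either composition vanishes). -/
theorem stmt18 {K : Type*} [Field K] (v : K × K × K × K × K × K × K)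
    (h1 : v.2.1 ≠ 0) (h2 : (PVIs₂ v).1 ≠ 0) (h3 : (PVIs₄ (PVIs₂ v)).2.1 ≠ 0)
    (h4 : v.1 ≠ 0) (h5 : (PVIs₄ v).2.1 ≠ 0) (h6 : (PVIs₂ (PVIs₄ v)).1 ≠ 0) :
    PVIs₂ (PVIs₄ (PVIs₂ v)) = PVIs₄ (PVIs₂ (PVIs₄ v)) := by
  obtain ⟨q, p, a0, a1, a2, a3, a4⟩ := v
  simp only [PVIs₂, PVIs₄] at *
  have hA : p * q + a2 ≠ 0 := by
    intro h; apply h2; field_simp; linear_combination h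
  have hB : p * q - a4 ≠ 0 := by
    intro h; apply h5; field_simp; linear_combination h
  have e1 : q + a2 / p = (p * q + a2) / p := by field_simp
  have e3 : p - a4 / q = (p * q - a4) / q := by field_simp; try ring
  have e2 : p - (a4 + a2) / ((p * q + a2) / p) = p * (p * q - a4) / (p * q + a2) := by
    rw [div_div_eq_mul_div]; field_simp; try ring
  have e4 : q + (a2 + a4) / ((p * q - a4) / q) = q * (p * q + a2) / (p * q - a4) := by
    rw [div_div_eq_mul_div, eq_div_iff hB, add_mul, div_mul_cancel₀ _ hB]; ring
  refine Prod.ext ?_ (Prod.ext ?_ (Prod.ext ?_ (Prod.ext ?_ (Prod.ext ?_ (Prod.ext ?_ ?_))))) <;>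
    · simp only [e1, e2, e3, e4]
      try field_simp
      try ring
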